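/- arXiv:1010.5668 — 6 statements merged into one kernel-verified Lean document; each statement's English description precedes it below -/
import Mathlib

section
/- Let x and y be future-pointing timelike vectors in the Minkowskian plane L². Then x + y is a future-pointing timelike vector, the reversed triangle inequality ‖x + y‖_h ≥ ‖x‖_h + ‖y‖_h holds, and equality holds if and only if y = c·x for some real number c > 0. -/
/-- The hyperbolic (Minkowskian) norm on ℝ². -/
noncomputable def hnorm (p : ℝ × ℝ) : ℝ := Real.sqrt |p.1 ^ 2 - p.2 ^ 2|

/-- A vector of the Minkowskian plane is future-pointing timelike. -/
def FutureTimelike (p : ℝ × ℝ) : Prop := p.1 ^ 2 - p.2 ^ 2 < 0 ∧ 0 < p.2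

theorem reversed_triangle_inequality_timelike
    (x y : ℝ × ℝ) (hx : FutureTimelike x) (hy : FutureTimelike y) :
    FutureTimelike (x + y) ∧
    hnorm (x + y) ≥ hnorm x + hnorm y ∧
    (hnorm (x + y) = hnorm x + hnorm y ↔ ∃ c : ℝ, 0 < c ∧ y = c • x) := by
  obtain ⟨hx1, hx2⟩ := hx
  obtain ⟨hy1, hy2⟩ := hy
  set a := x.1 with ha
  set b := x.2 with hb
  set c := y.1 with hc
  set d := y.2 with hd
  have hA : 0 < b ^ 2 - a ^ 2 := by linarith
  have hB : 0 < d ^ 2 - c ^ 2 := by linarith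
  have hab : |a| < b := by
    rw [← Real.sqrt_sq_eq_abs, ← Real.sqrt_sq hx2.le]
    exact Real.sqrt_lt_sqrt (sq_nonneg a) (by linarith)
  have hcd : |c| < d := by
    rw [← Real.sqrt_sq_eq_abs, ← Real.sqrt_sq hy2.le]
    exact Real.sqrt_lt_sqrt (sq_nonneg c) (by linarith)
  have ht : 0 < b * d - a * c := by
    have h1 : a * c ≤ |a| * |c| := by rw [← abs_mul]; exact le_abs_self _
    nlinarith [abs_nonneg a, abs_nonneg c]
  have hFT : FutureTimelike (x + y) := by
    constructor
    · show (a + c) ^ 2 - (b + d) ^ 2 < 0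
      nlinarith
    · show (0:ℝ) < b + d
      linarith
  have hnx : hnorm x = Real.sqrt (b ^ 2 - a ^ 2) := by
    rw [hnorm, abs_of_neg hx1]; ring_nf
  have hny : hnorm y = Real.sqrt (d ^ 2 - c ^ 2) := by
    rw [hnorm, abs_of_neg hy1]; ring_nf
  have hnxy : hnorm (x + y) = Real.sqrt ((b + d) ^ 2 - (a + c) ^ 2) := by
    rw [hnorm, abs_of_neg hFT.1]
    show Real.sqrt (-((a+c)^2 - (b+d)^2)) = _
    ring_nf
  -- key: sqrt(A*B) ≤ b*d - a*c
  have hkey : Real.sqrt ((b ^ 2 - a ^ 2) * (d ^ 2 - c ^ 2)) ≤ b * d - a * c := by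
    rw [show b * d - a * c = Real.sqrt ((b * d - a * c) ^ 2) from (Real.sqrt_sq ht.le).symm]
    exact Real.sqrt_le_sqrt (by nlinarith [sq_nonneg (a * d - b * c)])
  have hsum : Real.sqrt (b ^ 2 - a ^ 2) + Real.sqrt (d ^ 2 - c ^ 2)
      ≤ Real.sqrt ((b + d) ^ 2 - (a + c) ^ 2) := by
    rw [show (b + d) ^ 2 - (a + c) ^ 2
        = (b ^ 2 - a ^ 2) + (d ^ 2 - c ^ 2) + 2 * (b * d - a * c) by ring]
    rw [← Real.sqrt_sq (by positivity :
        (0:ℝ) ≤ Real.sqrt (b ^ 2 - a ^ 2) + Real.sqrt (d ^ 2 - c ^ 2))]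
    apply Real.sqrt_le_sqrt
    have h1 : Real.sqrt (b ^ 2 - a ^ 2) * Real.sqrt (d ^ 2 - c ^ 2)
        = Real.sqrt ((b ^ 2 - a ^ 2) * (d ^ 2 - c ^ 2)) := (Real.sqrt_mul hA.le _).symm
    have h2 := Real.sq_sqrt hA.le
    have h3 := Real.sq_sqrt hB.le
    nlinarith [hkey]
  refine ⟨hFT, by rw [hnx, hny, hnxy]; exact hsum, ?_⟩
  constructor
  · intro heq
    rw [hnx, hny, hnxy] at heq
    -- deduce a*d = b*c
    have hadbc : a * d - b * c = 0 := by
      have h2 := Real.sq_sqrt hA.le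
      have h3 := Real.sq_sqrt hB.le
      have h4 := Real.sq_sqrt (show (0:ℝ) ≤ (b+d)^2 - (a+c)^2 by nlinarith)
      have h1 : Real.sqrt (b ^ 2 - a ^ 2) * Real.sqrt (d ^ 2 - c ^ 2)
          = Real.sqrt ((b ^ 2 - a ^ 2) * (d ^ 2 - c ^ 2)) := (Real.sqrt_mul hA.le _).symm
      have h5 : Real.sqrt ((b ^ 2 - a ^ 2) * (d ^ 2 - c ^ 2)) = b * d - a * c := by
        have hsq : Real.sqrt ((b+d)^2 - (a+c)^2) ^ 2
            = (Real.sqrt (b ^ 2 - a ^ 2) + Real.sqrt (d ^ 2 - c ^ 2)) ^ 2 := by rw [heq]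
        have hexp : (Real.sqrt (b ^ 2 - a ^ 2) + Real.sqrt (d ^ 2 - c ^ 2)) ^ 2
            = (b ^ 2 - a ^ 2) + (d ^ 2 - c ^ 2)
              + 2 * Real.sqrt ((b ^ 2 - a ^ 2) * (d ^ 2 - c ^ 2)) := by
          rw [add_sq, h2, h3, mul_assoc, h1]; ring
        rw [h4, hexp] at hsq
        have hid : (b+d)^2-(a+c)^2
            = (b^2-a^2)+(d^2-c^2)+2*(b*d-a*c) := by ring
        linarith
      have h6 : (b * d - a * c) ^ 2 = (b ^ 2 - a ^ 2) * (d ^ 2 - c ^ 2) := by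
        rw [← h5, Real.sq_sqrt (by positivity)]
      have h7 : (a * d - b * c) ^ 2 = 0 := by linear_combination h6
      have := pow_eq_zero_iff (n := 2) (by norm_num) |>.mp h7
      linarith
    refine ⟨d / b, div_pos hy2 hx2, ?_⟩
    have hbne : b ≠ 0 := hx2.ne'
    apply Prod.ext
    · show c = d / b * a
      field_simp
      linear_combination -hadbc
    · show d = d / b * b
      field_simp
  · rintro ⟨k, hk, rfl⟩
    have h1 : (k • x).1 = k * a := rfl
    have h2 : (k • x).2 = k * b := rfl
    have hxk1 : (x + k • x).1 = (1 + k) * a := by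
      show a + k * a = _; ring
    have hxk2 : (x + k • x).2 = (1 + k) * b := by
      show b + k * b = _; ring
    rw [hnorm, hnorm, hnorm, hxk1, hxk2, h1, h2]
    have e1 : ((1 + k) * b) ^ 2 - ((1 + k) * a) ^ 2 = (1 + k) ^ 2 * (b ^ 2 - a ^ 2) := by ring
    have e2 : (k * a) ^ 2 - (k * b) ^ 2 = k ^ 2 * (a ^ 2 - b ^ 2) := by ring
    rw [show ((1+k)*a)^2 - ((1+k)*b)^2 = -((1 + k) ^ 2 * (b ^ 2 - a ^ 2)) by ring,
        show (k*a)^2 - (k*b)^2 = -(k ^ 2 * (b ^ 2 - a ^ 2)) by ring,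
        show a^2 - b^2 = -(b^2 - a^2) by ring,
        abs_neg, abs_neg, abs_neg, abs_of_pos (by positivity), abs_of_pos hA,
        abs_of_pos (by positivity), Real.sqrt_mul (by positivity), Real.sqrt_mul (by positivity),
        Real.sqrt_sq (by positivity : (0:ℝ) ≤ 1 + k), Real.sqrt_sq hk.le]
    ring
end

section
/- Let x and y be future-pointing spacelike vectors in the Minkowskian plane L². Then x + y is a future-pointing spacelike vector, the reversed triangle inequality ‖x + y‖_h ≥ ‖x‖_h + ‖y‖_h holds, and equality holds if and only if y = c·x for some real number c > 0. -/
/-- A vector of the Minkowskian plane is future-pointing spacelike. -/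
def FutureSpacelike (p : ℝ × ℝ) : Prop := 0 < p.1 ^ 2 - p.2 ^ 2 ∧ 0 < p.1

theorem reversed_triangle_inequality_spacelike
    (x y : ℝ × ℝ) (hx : FutureSpacelike x) (hy : FutureSpacelike y) :
    FutureSpacelike (x + y) ∧
    hnorm (x + y) ≥ hnorm x + hnorm y ∧
    (hnorm (x + y) = hnorm x + hnorm y ↔ ∃ c : ℝ, 0 < c ∧ y = c • x) := by
  obtain ⟨hx1, hx2⟩ := hx
  obtain ⟨hy1, hy2⟩ := hy
  set a := x.1 with ha
  set b := x.2 with hb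
  set c := y.1 with hc
  set d := y.2 with hd
  have hab : b + a > 0 := by nlinarith [sq_nonneg (a + b), sq_nonneg (a - b)]
  have hab' : b < a := by nlinarith
  have hcd : d + c > 0 := by nlinarith [sq_nonneg (c + d), sq_nonneg (c - d)]
  have hcd' : d < c := by nlinarith
  have hmul : 0 < a * c - b * d := by nlinarith
  have hsum1 : 0 < (a + c) ^ 2 - (b + d) ^ 2 := by nlinarith
  have hnx : hnorm x = Real.sqrt (a ^ 2 - b ^ 2) := by rw [hnorm, abs_of_pos hx1]
  have hny : hnorm y = Real.sqrt (c ^ 2 - d ^ 2) := by rw [hnorm, abs_of_pos hy1]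
  have hxy1 : (x + y).1 = a + c := rfl
  have hxy2 : (x + y).2 = b + d := rfl
  have hnxy : hnorm (x + y) = Real.sqrt ((a + c) ^ 2 - (b + d) ^ 2) := by
    rw [hnorm, hxy1, hxy2, abs_of_pos hsum1]
  have hA : (0:ℝ) ≤ a ^ 2 - b ^ 2 := hx1.le
  have hB : (0:ℝ) ≤ c ^ 2 - d ^ 2 := hy1.le
  have hsA := Real.sq_sqrt hA
  have hsB := Real.sq_sqrt hB
  have hsAn := Real.sqrt_nonneg (a ^ 2 - b ^ 2)
  have hsBn := Real.sqrt_nonneg (c ^ 2 - d ^ 2)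
  have hprod : Real.sqrt (a ^ 2 - b ^ 2) * Real.sqrt (c ^ 2 - d ^ 2)
      = Real.sqrt ((a ^ 2 - b ^ 2) * (c ^ 2 - d ^ 2)) :=
    (Real.sqrt_mul hA _).symm
  have hABle : (a ^ 2 - b ^ 2) * (c ^ 2 - d ^ 2) ≤ (a * c - b * d) ^ 2 := by
    nlinarith [sq_nonneg (a * d - b * c)]
  have hsqle : Real.sqrt ((a ^ 2 - b ^ 2) * (c ^ 2 - d ^ 2)) ≤ a * c - b * d := by
    calc Real.sqrt ((a ^ 2 - b ^ 2) * (c ^ 2 - d ^ 2))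
        ≤ Real.sqrt ((a * c - b * d) ^ 2) := Real.sqrt_le_sqrt hABle
      _ = a * c - b * d := by rw [Real.sqrt_sq hmul.le]
  have hineq : hnorm (x + y) ≥ hnorm x + hnorm y := by
    rw [hnx, hny, hnxy]
    rw [ge_iff_le, ← Real.sqrt_sq (by positivity :
      (0:ℝ) ≤ Real.sqrt (a ^ 2 - b ^ 2) + Real.sqrt (c ^ 2 - d ^ 2))]
    apply Real.sqrt_le_sqrt
    have : (Real.sqrt (a ^ 2 - b ^ 2) + Real.sqrt (c ^ 2 - d ^ 2)) ^ 2
        = (a ^ 2 - b ^ 2) + (c ^ 2 - d ^ 2)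
          + 2 * (Real.sqrt (a ^ 2 - b ^ 2) * Real.sqrt (c ^ 2 - d ^ 2)) := by
      rw [add_sq, hsA, hsB]; ring
    rw [this, hprod]
    have hrg : (a + c) ^ 2 - (b + d) ^ 2
        = (a ^ 2 - b ^ 2) + (c ^ 2 - d ^ 2) + 2 * (a * c - b * d) := by ring
    linarith [hsqle]
  refine ⟨⟨hsum1, by simpa [hxy1] using add_pos hx2 hy2⟩, hineq, ?_, ?_⟩
  · -- equality → ∃ c
    intro heq
    have hsq : (a + c) ^ 2 - (b + d) ^ 2
        = (Real.sqrt (a ^ 2 - b ^ 2) + Real.sqrt (c ^ 2 - d ^ 2)) ^ 2 := by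
      rw [← hnx, ← hny, ← heq, hnxy, Real.sq_sqrt hsum1.le]
    have hsqval : Real.sqrt ((a ^ 2 - b ^ 2) * (c ^ 2 - d ^ 2)) = a * c - b * d := by
      have e1 : (Real.sqrt (a ^ 2 - b ^ 2) + Real.sqrt (c ^ 2 - d ^ 2)) ^ 2
          = (a ^ 2 - b ^ 2) + (c ^ 2 - d ^ 2)
            + 2 * (Real.sqrt (a ^ 2 - b ^ 2) * Real.sqrt (c ^ 2 - d ^ 2)) := by
        rw [add_sq, hsA, hsB]; ring
      rw [e1, hprod] at hsq
      have hrg : (a + c) ^ 2 - (b + d) ^ 2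
          = (a ^ 2 - b ^ 2) + (c ^ 2 - d ^ 2) + 2 * (a * c - b * d) := by ring
      linarith
    have hABeq : (a ^ 2 - b ^ 2) * (c ^ 2 - d ^ 2) = (a * c - b * d) ^ 2 := by
      have := Real.sq_sqrt (mul_nonneg hA hB)
      rw [hsqval] at this
      linarith
    have hdet : a * d - b * c = 0 := by
      have h0 : (a * d - b * c) ^ 2 = 0 := by linear_combination -hABeq
      exact sq_eq_zero_iff.mp h0
    refine ⟨c / a, div_pos hy2 hx2, ?_⟩
    have hane : a ≠ 0 := ne_of_gt hx2
    refine Prod.ext ?_ ?_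
    · simp only [Prod.smul_fst, smul_eq_mul]
      field_simp
      rfl
    · simp only [Prod.smul_snd, smul_eq_mul]
      field_simp
      linear_combination hdet
  · -- ∃ c → equality
    rintro ⟨k, hk, rfl⟩
    have hc' : c = k * a := rfl
    have hd' : d = k * b := rfl
    rw [hnx, hny, hnxy, hc', hd']
    have h1 : (a + k * a) ^ 2 - (b + k * b) ^ 2 = (1 + k) ^ 2 * (a ^ 2 - b ^ 2) := by ring
    have h2 : (k * a) ^ 2 - (k * b) ^ 2 = k ^ 2 * (a ^ 2 - b ^ 2) := by ring
    rw [h1, h2, Real.sqrt_mul (sq_nonneg _), Real.sqrt_mul (sq_nonneg _),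
      Real.sqrt_sq (by linarith : (0:ℝ) ≤ 1 + k), Real.sqrt_sq hk.le]
    ring
end

section
/- Let u, v, w be future-pointing spacelike vectors in the Minkowskian plane L² (representing the sides OA, AB, BC of a quadrilateral OABC), and let z = u + v + w (representing the side OC). If ‖z‖_h = ‖u‖_h + ‖v‖_h + ‖w‖_h, then the vectors u, v, w, z are collinear; more precisely, there exist positive reals s and t such that v = s·u and w = t·u. -/
lemma hnorm_sq (p : ℝ × ℝ) (h : 0 < p.1 ^ 2 - p.2 ^ 2) :
    hnorm p ^ 2 = p.1 ^ 2 - p.2 ^ 2 := by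
  rw [hnorm, abs_of_pos h, Real.sq_sqrt h.le]

lemma hnorm_nonneg (p : ℝ × ℝ) : 0 ≤ hnorm p := Real.sqrt_nonneg _

lemma cross_pos (u v : ℝ × ℝ) (hu : FutureSpacelike u) (hv : FutureSpacelike v) :
    0 < u.1 * v.1 - u.2 * v.2 := by
  nlinarith [hu.1, hv.1, hu.2, hv.2, mul_pos hu.2 hv.2, mul_pos hu.1 hv.1,
    sq_nonneg (u.1 * v.1 + u.2 * v.2)]

lemma cross_ge (u v : ℝ × ℝ) (hu : FutureSpacelike u) (hv : FutureSpacelike v) :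
    hnorm u * hnorm v ≤ u.1 * v.1 - u.2 * v.2 := by
  have hu2 := hnorm_sq u hu.1
  have hv2 := hnorm_sq v hv.1
  have h1 := hnorm_nonneg u
  have h2 := hnorm_nonneg v
  have hp := cross_pos u v hu hv
  nlinarith [sq_nonneg (u.1 * v.2 - u.2 * v.1), mul_nonneg h1 h2]

lemma cross_eq (u v : ℝ × ℝ) (hu : FutureSpacelike u) (hv : FutureSpacelike v)
    (h : hnorm u * hnorm v = u.1 * v.1 - u.2 * v.2) :
    u.1 * v.2 = u.2 * v.1 := by
  have hP2 : (u.1 * v.1 - u.2 * v.2) ^ 2 = (u.1 ^ 2 - u.2 ^ 2) * (v.1 ^ 2 - v.2 ^ 2) := by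
    rw [← h, mul_pow, hnorm_sq u hu.1, hnorm_sq v hv.1]
  have h0 : (u.1 * v.2 - u.2 * v.1) ^ 2 = 0 := by nlinarith [hP2]
  have := pow_eq_zero_iff (n := 2) (by norm_num) |>.mp h0
  linarith [this]

set_option maxHeartbeats 1000000 in
theorem quadrilateral_equality_collinear
    (u v w : ℝ × ℝ) (hu : FutureSpacelike u) (hv : FutureSpacelike v)
    (hw : FutureSpacelike w)
    (heq : hnorm (u + v + w) = hnorm u + hnorm v + hnorm w) :
    ∃ s t : ℝ, 0 < s ∧ 0 < t ∧ v = s • u ∧ w = t • u := by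
  set z := u + v + w with hz
  have hz1 : z.1 = u.1 + v.1 + w.1 := rfl
  have hz2 : z.2 = u.2 + v.2 + w.2 := rfl
  have huv := cross_ge u v hu hv
  have huw := cross_ge u w hu hw
  have hvw := cross_ge v w hv hw
  have huv' := cross_pos u v hu hv
  have huw' := cross_pos u w hu hw
  have hvw' := cross_pos v w hv hw
  have hzsl : 0 < z.1 ^ 2 - z.2 ^ 2 := by
    rw [hz1, hz2]
    nlinarith [hu.1, hv.1, hw.1]
  have hzsq := hnorm_sq z hzsl
  have hu2 := hnorm_sq u hu.1
  have hv2 := hnorm_sq v hv.1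
  have hw2 := hnorm_sq w hw.1
  have hzval : z.1 ^ 2 - z.2 ^ 2 = (u.1^2 - u.2^2) + (v.1^2 - v.2^2) + (w.1^2 - w.2^2)
      + 2 * ((u.1*v.1 - u.2*v.2) + (u.1*w.1 - u.2*w.2) + (v.1*w.1 - v.2*w.2)) := by
    rw [hz1, hz2]; ring
  have hnu := hnorm_nonneg u
  have hnv := hnorm_nonneg v
  have hnw := hnorm_nonneg w
  -- squaring heq
  have hsq : (hnorm u + hnorm v + hnorm w) ^ 2 = z.1 ^ 2 - z.2 ^ 2 := by
    rw [← heq, hzsq]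
  have hsum : hnorm u * hnorm v + hnorm u * hnorm w + hnorm v * hnorm w
      = (u.1*v.1 - u.2*v.2) + (u.1*w.1 - u.2*w.2) + (v.1*w.1 - v.2*w.2) := by
    nlinarith [hsq, hzval, hu2, hv2, hw2]
  have k1 : hnorm u * hnorm v = u.1*v.1 - u.2*v.2 := by linarith
  have k2 : hnorm u * hnorm w = u.1*w.1 - u.2*w.2 := by linarith
  have e1 := cross_eq u v hu hv k1
  have e2 := cross_eq u w hu hw k2
  refine ⟨v.1 / u.1, w.1 / u.1, div_pos hv.2 hu.2, div_pos hw.2 hu.2, ?_, ?_⟩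
  · have hne : u.1 ≠ 0 := ne_of_gt hu.2
    have h1 : v.1 = v.1 / u.1 * u.1 := by field_simp
    have h2 : v.2 = v.1 / u.1 * u.2 := by field_simp; linarith [e1]
    exact Prod.ext h1 h2
  · have hne : u.1 ≠ 0 := ne_of_gt hu.2
    have h1 : w.1 = w.1 / u.1 * u.1 := by field_simp
    have h2 : w.2 = w.1 / u.1 * u.2 := by field_simp; linarith [e2]
    exact Prod.ext h1 h2
end

section
/- Let a, b, g, h be positive real numbers with g = b and h ≠ a. Then for every real θ, A(θ) + C(θ) ≠ 0, where A(θ) = 2gb − 2ab·cosh θ and C(θ) = h² − g² − b² − a² + 2ag·cosh θ; that is, the Minkowskian planar 4R linkage has no branching points. -/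
theorem no_branching_points (a b g h : ℝ) (ha : 0 < a) (hb : 0 < b)
    (hg : 0 < g) (hh : 0 < h) (hgb : g = b) (hha : h ≠ a) (θ : ℝ) :
    (2 * g * b - 2 * a * b * Real.cosh θ) +
      (h ^ 2 - g ^ 2 - b ^ 2 - a ^ 2 + 2 * a * g * Real.cosh θ) ≠ 0 := by
  intro hc
  have hsum : h ^ 2 - a ^ 2 = 0 := by rw [hgb] at hc; nlinarith [hc]
  exact hha (by nlinarith)
end

section
/- Let a, b, g, h be real numbers with a ≠ 0 and g ≠ 0, and let θ be a real number. Then B(θ)² + C(θ)² − A(θ)² = 0 if and only if cosh θ = (a² + g² − (b + h)²)/(2ag) or cosh θ = (a² + g² − (b − h)²)/(2ag), where A(θ) = 2gb − 2ab·cosh θ, B(θ) = 2ab·sinh θ, and C(θ) = h² − g² − b² − a² + 2ag·cosh θ. (These values cosh θ_min = (a² + g² − (b+h)²)/(2ag) and cosh θ_max = (a² + g² − (b−h)²)/(2ag) define the limiting angles of the input crank.) -/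
theorem input_crank_limits (a b g h θ : ℝ) (ha : a ≠ 0) (hg : g ≠ 0) :
    (2 * a * b * Real.sinh θ) ^ 2 +
      (h ^ 2 - g ^ 2 - b ^ 2 - a ^ 2 + 2 * a * g * Real.cosh θ) ^ 2 -
      (2 * g * b - 2 * a * b * Real.cosh θ) ^ 2 = 0 ↔
    Real.cosh θ = (a ^ 2 + g ^ 2 - (b + h) ^ 2) / (2 * a * g) ∨
    Real.cosh θ = (a ^ 2 + g ^ 2 - (b - h) ^ 2) / (2 * a * g) := by
  have hs : Real.sinh θ ^ 2 = Real.cosh θ ^ 2 - 1 := by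
    have := Real.cosh_sq_sub_sinh_sq θ; nlinarith
  set c := Real.cosh θ
  have h2ag : (2 : ℝ) * a * g ≠ 0 := by positivity
  have hfac : (2 * a * b * Real.sinh θ) ^ 2 +
      (h ^ 2 - g ^ 2 - b ^ 2 - a ^ 2 + 2 * a * g * c) ^ 2 -
      (2 * g * b - 2 * a * b * c) ^ 2 =
      (2 * a * g * c - (a ^ 2 + g ^ 2 - (b + h) ^ 2)) *
      (2 * a * g * c - (a ^ 2 + g ^ 2 - (b - h) ^ 2)) := by
    linear_combination (2*a*b)^2 * hs
  rw [hfac, mul_eq_zero, sub_eq_zero, sub_eq_zero]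
  rw [mul_comm (2 * a * g) c, ← eq_div_iff h2ag, ← eq_div_iff h2ag]
end

section
/- Let a, b, g, h be real numbers with b ≠ 0 and g ≠ 0, and let ψ be a real number. Then (2ab·sinh ψ)² + (h² − b² − g² − a² − 2gb·cosh ψ)² − (2ag + 2ab·cosh ψ)² = 0 if and only if cosh ψ = ((a + h)² − g² − b²)/(2bg) or cosh ψ = ((a − h)² − g² − b²)/(2bg). (These values cosh ψ_max = ((a+h)² − g² − b²)/(2bg) and cosh ψ_min = ((a−h)² − g² − b²)/(2bg) define the limiting angles of the output crank.) -/
theorem output_crank_limits (a b g h ψ : ℝ) (hb : b ≠ 0) (hg : g ≠ 0) :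
    (2 * a * b * Real.sinh ψ) ^ 2 +
      (h ^ 2 - b ^ 2 - g ^ 2 - a ^ 2 - 2 * g * b * Real.cosh ψ) ^ 2 -
      (2 * a * g + 2 * a * b * Real.cosh ψ) ^ 2 = 0 ↔
    Real.cosh ψ = ((a + h) ^ 2 - g ^ 2 - b ^ 2) / (2 * b * g) ∨
    Real.cosh ψ = ((a - h) ^ 2 - g ^ 2 - b ^ 2) / (2 * b * g) := by
  have hbg : (2 : ℝ) * b * g ≠ 0 := by positivity
  have hs : Real.sinh ψ ^ 2 = Real.cosh ψ ^ 2 - 1 := by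
    have := Real.cosh_sq ψ; linarith
  have key : (2 * a * b * Real.sinh ψ) ^ 2 +
      (h ^ 2 - b ^ 2 - g ^ 2 - a ^ 2 - 2 * g * b * Real.cosh ψ) ^ 2 -
      (2 * a * g + 2 * a * b * Real.cosh ψ) ^ 2 =
      (2 * b * g * Real.cosh ψ - ((a + h) ^ 2 - g ^ 2 - b ^ 2)) *
      (2 * b * g * Real.cosh ψ - ((a - h) ^ 2 - g ^ 2 - b ^ 2)) := by
    rw [mul_pow, mul_pow, hs]; ring
  rw [key, mul_eq_zero, sub_eq_zero, sub_eq_zero, mul_comm (2 * b * g),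
    ← eq_div_iff hbg, ← eq_div_iff hbg]
end
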